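/- Fix positive integers t and n. The number of overpartitions of n with largest minus smallest part at most t and largest part not overlined when this difference equals t, equals the number of pairs (α, β) where α is a possibly empty partition of some n₁ into parts all equal to t, β is a nonempty overpartition of n − n₁ into parts at most t, and moreover the numbers of overlined parts agree in a refined sense: the count of such overpartitions of n with m overlined parts equals the count of such pairs with β having m overlined parts, for every m ≥ 0. -/

import Mathlib

/-- An overpartition: a multiset of parts together with the finite set of
overlined part sizes. -/
abbrev OP : Type := Multiset ℕ × Finset ℕ

/-- Validity: all parts positive, and every overlined size actually occurs as a part
(so at most one part of each size is overlined). -/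
def OP.IsValid (π : OP) : Prop := (∀ p ∈ π.1, 0 < p) ∧ ∀ p ∈ π.2, p ∈ π.1

/-- The weight (sum of parts). -/
def OP.wt (π : OP) : ℕ := π.1.sum

/-- The number of parts. -/
def OP.len (π : OP) : ℕ := Multiset.card π.1

/-- The number of overlined parts. -/
def OP.o (π : OP) : ℕ := π.2.card

/-- The largest part. -/
def OP.maxPart (π : OP) : ℕ := π.1.sup

/-- The smallest part. -/
noncomputable def OP.minPart (π : OP) : ℕ := sInf {p | p ∈ π.1}

/-- The number of parts equal to `t`. -/
def OP.mT (t : ℕ) (π : OP) : ℕ := π.1.count t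

/-- Membership in `G_t`: nonempty, valid, largest minus smallest part at most `t`,
and the largest part not overlined when this difference is exactly `t`. -/
def InG (t : ℕ) (π : OP) : Prop :=
  π.IsValid ∧ π.1 ≠ 0 ∧ π.maxPart - π.minPart ≤ t ∧
    (π.maxPart - π.minPart = t → π.maxPart ∉ π.2)

/-- Membership in `P_t`: nonempty, valid, all parts at most `t`, no part `t` overlined. -/
def InP (t : ℕ) (π : OP) : Prop :=
  π.IsValid ∧ π.1 ≠ 0 ∧ (∀ p ∈ π.1, p ≤ t) ∧ t ∉ π.2

/-- The map `φ`: each part is replaced by its residue mod `t` (deleted if zero,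
retaining its overline) together with `⌊part/t⌋` non-overlined copies of `t`. -/
def phi (t : ℕ) (π : OP) : OP :=
  (Multiset.replicate (π.1.map (· / t)).sum t + (π.1.map (· % t)).filter (· ≠ 0),
   (π.2.image (· % t)).erase 0)

/-- Membership in `B_t`: bipartitions whose first component has all parts equal to `t`
(none overlined) and whose second component is a nonempty overpartition with parts `≤ t`. -/
def InB (t : ℕ) (b : Multiset ℕ × OP) : Prop :=
  (∀ a ∈ b.1, a = t) ∧ b.2.IsValid ∧ b.2.1 ≠ 0 ∧ ∀ p ∈ b.2.1, p ≤ t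

/-- The map `ψ`: merge the two components, un-overlining any overlined `t`. -/
def psi (t : ℕ) (b : Multiset ℕ × OP) : OP := (b.1 + b.2.1, b.2.2.erase t)

section helpers
variable {t : ℕ} {π : OP}

lemma minPart_mem (h : π.1 ≠ 0) : π.minPart ∈ π.1 := by
  have : {p | p ∈ π.1}.Nonempty := by
    obtain ⟨a, ha⟩ := Multiset.exists_mem_of_ne_zero h
    exact ⟨a, ha⟩
  exact Nat.sInf_mem this

lemma minPart_le {p : ℕ} (hp : p ∈ π.1) : π.minPart ≤ p := Nat.sInf_le hp

lemma le_maxPart {p : ℕ} (hp : p ∈ π.1) : p ≤ π.maxPart := Multiset.le_sup hp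

lemma part_le_min_add (hπ : InG t π) {p : ℕ} (hp : p ∈ π.1) : p ≤ π.minPart + t := by
  have h1 := le_maxPart hp
  have h2 := minPart_le (minPart_mem hπ.2.1 : π.minPart ∈ π.1)
  have h3 := le_maxPart (minPart_mem hπ.2.1)
  have h4 := hπ.2.2.1
  omega

lemma top_not_overlined (hπ : InG t π) (hmem : π.minPart + t ∈ π.1) (ht : 0 < t) :
    π.minPart + t ∉ π.2 := by
  have h1 := le_maxPart hmem
  have h3 := le_maxPart (minPart_mem hπ.2.1)
  have hub : π.maxPart ≤ π.minPart + t := by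
    have h2 := minPart_le (minPart_mem hπ.2.1 : π.minPart ∈ π.1)
    have := hπ.2.2.1
    omega
  have hmax : π.maxPart = π.minPart + t := le_antisymm hub h1
  have := hπ.2.2.2 (by omega)
  rwa [hmax] at this

lemma ov_inj (ht : 0 < t) (hπ : InG t π) :
    ∀ p ∈ π.2, ∀ p' ∈ π.2, p % t = p' % t → p = p' := by
  have key : ∀ p ∈ π.2, ∀ p' ∈ π.2, p % t = p' % t → p < p' → False := by
    intro p hp p' hp' hmod hlt
    have hp1 : p ∈ π.1 := hπ.1.2 p hp
    have hp1' : p' ∈ π.1 := hπ.1.2 p' hp'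
    have hd : t ∣ (p' - p) := (Nat.modEq_iff_dvd' hlt.le).mp hmod
    obtain ⟨m, hm⟩ := hd
    have hub := part_le_min_add hπ hp1'
    have hlb := minPart_le hp1
    have hlb' := minPart_le hp1'
    have hsub : p' - p ≤ t := by omega
    have hpos : 0 < p' - p := by omega
    rw [hm] at hsub hpos
    have hm0 : m ≠ 0 := by rintro rfl; simp at hpos
    have hmle : m ≤ 1 := Nat.le_of_mul_le_mul_left (by simpa using hsub) ht
    have hm1 : m = 1 := by omega
    subst hm1
    rw [mul_one] at hm
    have hpt : p' = π.minPart + t := by omega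
    exact top_not_overlined hπ (hpt ▸ hp1') ht (hpt ▸ hp')
  intro p hp p' hp' hmod
  rcases lt_trichotomy p p' with h | h | h
  · exact absurd (key p hp p' hp' hmod h) id
  · exact h
  · exact absurd (key p' hp' p hp hmod.symm h) id

lemma sum_filter_ne_zero (S : Multiset ℕ) : (S.filter (· ≠ 0)).sum = S.sum := by
  have h0 : (S.filter (fun x => ¬ x ≠ 0)).sum = 0 := by
    apply Multiset.sum_eq_zero
    intro x hx
    have := Multiset.of_mem_filter hx
    simpa using this
  conv_rhs => rw [← Multiset.filter_add_not (· ≠ 0) S]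
  rw [Multiset.sum_add, h0, add_zero]

end helpers


section helpers2

lemma mod_add_mul_self (x t q : ℕ) (hx : x < t) : (x + t * q) % t = x := by
  rw [Nat.add_mul_mod_self_left]
  exact Nat.mod_eq_of_lt hx

lemma div_add_mul_self (x t q : ℕ) (ht : 0 < t) (hx : x < t) : (x + t * q) / t = q := by
  rw [Nat.add_mul_div_left _ _ ht]
  rw [Nat.div_eq_of_lt hx, zero_add]

lemma sum_map_add_const (m : Multiset ℕ) (a : ℕ) :
    (m.map (· + a)).sum = m.sum + Multiset.card m * a := by
  induction m using Multiset.induction with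
  | empty => simp
  | cons x s ih => simp [ih]; ring

lemma take_drop_facts (l : List ℕ) (hl : l.Pairwise (· ≤ ·)) (j : ℕ) (hj : j < l.length) :
    (l.drop j).headI ∈ l.drop j ∧ (∀ y ∈ l.drop j, (l.drop j).headI ≤ y) ∧
      (∀ x ∈ l.take j, x ≤ (l.drop j).headI) := by
  have hne : l.drop j ≠ [] := by
    intro h
    have : (l.drop j).length = l.length - j := List.length_drop
    rw [h] at this
    simp at this
    omega
  obtain ⟨d, ds, hds⟩ := List.exists_cons_of_ne_nil hne
  have hpw : (l.take j ++ l.drop j).Pairwise (· ≤ ·) := by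
    rw [List.take_append_drop]; exact hl
  have hcross := (List.pairwise_append.mp hpw).2.2
  have hdrop : (l.drop j).Pairwise (· ≤ ·) := (List.pairwise_append.mp hpw).2.1
  rw [hds] at hdrop ⊢
  simp only [List.headI_cons]
  have hd1 := (List.pairwise_cons.mp hdrop).1
  refine ⟨List.mem_cons_self, ?_, ?_⟩
  · intro y hy
    rcases List.mem_cons.mp hy with h | h
    · omega
    · exact hd1 y h
  · intro x hx
    exact hcross x hx d (by rw [hds]; exact List.mem_cons_self)

lemma InG_of_bounds (t lo : ℕ) (π : OP) (hne : π.1 ≠ 0) (hpos : ∀ p ∈ π.1, 0 < p)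
    (hov : ∀ p ∈ π.2, p ∈ π.1) (hbd : ∀ p ∈ π.1, lo ≤ p ∧ p ≤ lo + t)
    (htop : lo + t ∉ π.2) : InG t π := by
  have hmin := minPart_mem hne
  have hminlo := (hbd _ hmin).1
  have hmaxhi : π.maxPart ≤ lo + t := Multiset.sup_le.mpr (fun p hp => (hbd p hp).2)
  have hminmax : π.minPart ≤ π.maxPart := le_maxPart hmin
  refine ⟨⟨hpos, hov⟩, hne, by omega, ?_⟩
  intro hdiff hcon
  have : π.maxPart = lo + t := by omega
  rw [this] at hcon
  exact htop hcon

end helpers2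

/-- forward map -/
def fwd (t : ℕ) (π : OP) : Multiset ℕ × OP :=
  (Multiset.replicate ((π.1.map (· / t)).sum - Multiset.card (π.1.filter (· % t = 0))) t,
   ((π.1.map (· % t)).filter (· ≠ 0) +
      Multiset.replicate (Multiset.card (π.1.filter (· % t = 0))) t,
    (π.2.image (· % t)).erase 0 ∪ (if 0 ∈ π.2.image (· % t) then {t} else ∅)))

/-- backward map -/
def bwd (t : ℕ) (b : Multiset ℕ × OP) : OP :=
  let R := b.2.1.filter (· < t)
  let k := Multiset.card R
  let E := b.2.1.count t
  let c := Multiset.card b.1 + E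
  let q := c / (k + E)
  let r := c % (k + E)
  let O := b.2.2.erase t
  let RL := R.sort (· ≤ ·)
  if E ≤ r then
    let j := r - E
    let mA := (RL.drop j).headI
    ((↑((RL.take j).map (· + t * (q+1))) + ↑((RL.drop j).map (· + t * q))
       + Multiset.replicate E (t * (q+1)),
     O.image (fun x => if mA ≤ x then x + t * q else x + t * (q+1))
       ∪ (if t ∈ b.2.2 then {t * (q+1)} else ∅)))
  else
    ((b.2.1.filter (· < t)).map (· + t * q) + Multiset.replicate (E - r) (t * q)
       + Multiset.replicate r (t * (q+1)),
     O.image (· + t * q) ∪ (if t ∈ b.2.2 then {t * q} else ∅))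

lemma E_le_c (t : ℕ) (ht : 0 < t) (π : OP) (hpos : ∀ p ∈ π.1, 0 < p) :
    Multiset.card (π.1.filter (· % t = 0)) ≤ (π.1.map (· / t)).sum := by
  have hsplit := Multiset.filter_add_not (fun p => p % t = 0) π.1
  have hc : (π.1.map (· / t)).sum
      = ((π.1.filter (· % t = 0)).map (· / t)).sum
        + ((π.1.filter (fun p => ¬ p % t = 0)).map (· / t)).sum := by
    rw [← Multiset.sum_add, ← Multiset.map_add, hsplit]
  have h2 : Multiset.card (π.1.filter (· % t = 0)) • 1
      ≤ ((π.1.filter (· % t = 0)).map (· / t)).sum := by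
    rw [← Multiset.card_map (· / t)]
    apply Multiset.card_nsmul_le_sum
    intro x hx
    obtain ⟨p, hp, rfl⟩ := Multiset.mem_map.mp hx
    have hp0 := hpos p (Multiset.mem_of_mem_filter hp)
    have hpm := Multiset.of_mem_filter hp
    have htp : t ≤ p := by
      rcases Nat.lt_or_ge p t with h | h
      · have := Nat.mod_eq_of_lt h; omega
      · exact h
    exact (Nat.one_le_div_iff ht).mpr htp
  simp only [smul_eq_mul, mul_one] at h2
  omega

lemma fwd_spec (t : ℕ) (ht : 0 < t) (π : OP) (hπ : InG t π) :
    InB t (fwd t π) ∧ (fwd t π).1.sum + (fwd t π).2.1.sum = π.wt ∧ (fwd t π).2.o = π.o := by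
  have hpos := hπ.1.1
  have hov := hπ.1.2
  have hne := hπ.2.1
  have hEc := E_le_c t ht π hpos
  refine ⟨⟨?_, ⟨?_, ?_⟩, ?_, ?_⟩, ?_, ?_⟩
  · intro a ha
    exact Multiset.eq_of_mem_replicate ha
  · -- positivity of parts of β
    intro p hp
    rcases Multiset.mem_add.mp hp with h | h
    · have := Multiset.of_mem_filter h
      omega
    · have := Multiset.eq_of_mem_replicate h
      omega
  · -- overlines ⊆ parts
    intro p hp
    rcases Finset.mem_union.mp hp with h | h
    · obtain ⟨hne0, hmem⟩ := Finset.mem_erase.mp h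
      obtain ⟨x, hx, rfl⟩ := Finset.mem_image.mp hmem
      apply Multiset.mem_add.mpr
      left
      apply Multiset.mem_filter.mpr
      exact ⟨Multiset.mem_map_of_mem _ (hov x hx), hne0⟩
    · by_cases h0 : 0 ∈ π.2.image (· % t)
      · rw [if_pos h0] at h
        rw [Finset.mem_singleton.mp h]
        apply Multiset.mem_add.mpr
        right
        apply Multiset.mem_replicate.mpr
        refine ⟨?_, rfl⟩
        obtain ⟨x, hx, hx0⟩ := Finset.mem_image.mp h0
        intro hcard
        rw [Multiset.card_eq_zero] at hcard
        have : x ∈ π.1.filter (· % t = 0) :=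
          Multiset.mem_filter.mpr ⟨hov x hx, hx0⟩
        rw [hcard] at this
        simp at this
      · rw [if_neg h0] at h
        simp at h
  · -- β nonempty
    obtain ⟨p, hp⟩ := Multiset.exists_mem_of_ne_zero hne
    intro hzero
    have hzero' : ((π.1.map (· % t)).filter (· ≠ 0)
        + Multiset.replicate (Multiset.card (π.1.filter (· % t = 0))) t) = 0 := hzero
    by_cases hm : p % t = 0
    · have hmemf : p ∈ π.1.filter (· % t = 0) := Multiset.mem_filter.mpr ⟨hp, hm⟩
      have h1 : t ∈ (π.1.map (· % t)).filter (· ≠ 0)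
          + Multiset.replicate (Multiset.card (π.1.filter (· % t = 0))) t := by
        apply Multiset.mem_add.mpr
        right
        apply Multiset.mem_replicate.mpr
        refine ⟨?_, rfl⟩
        intro h
        rw [Multiset.card_eq_zero] at h
        rw [h] at hmemf
        simp at hmemf
      rw [hzero'] at h1
      simp at h1
    · have h1 : p % t ∈ (π.1.map (· % t)).filter (· ≠ 0)
          + Multiset.replicate (Multiset.card (π.1.filter (· % t = 0))) t :=
        Multiset.mem_add.mpr (Or.inl (Multiset.mem_filter.mpr ⟨Multiset.mem_map_of_mem _ hp, hm⟩))
      rw [hzero'] at h1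
      simp at h1
  · -- parts ≤ t
    intro p hp
    rcases Multiset.mem_add.mp hp with h | h
    · obtain ⟨x, _, rfl⟩ := Multiset.mem_map.mp (Multiset.mem_of_mem_filter h)
      exact le_of_lt (Nat.mod_lt x ht)
    · exact le_of_eq (Multiset.eq_of_mem_replicate h)
  · -- weight
    show (Multiset.replicate _ t).sum + (_ + Multiset.replicate _ t).sum = π.1.sum
    rw [Multiset.sum_add, Multiset.sum_replicate, Multiset.sum_replicate,
      sum_filter_ne_zero, smul_eq_mul, smul_eq_mul]
    have key : (π.1.map (· / t)).sum * t + (π.1.map (· % t)).sum = π.1.sum := by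
      rw [← Multiset.sum_map_mul_right, ← Multiset.sum_map_add]
      conv_rhs => rw [← Multiset.map_id π.1]
      exact congrArg _ (Multiset.map_congr rfl (fun p _ => by simpa [Nat.mul_comm] using Nat.div_add_mod p t))
    have expand : ((π.1.map (· / t)).sum - Multiset.card (π.1.filter (· % t = 0))) * t
        + Multiset.card (π.1.filter (· % t = 0)) * t = (π.1.map (· / t)).sum * t := by
      rw [← Nat.add_mul]
      congr 1
      omega
    omega
  · -- o
    have hinj : Set.InjOn (· % t) ↑π.2 := fun p hp p' hp' h => ov_inj ht hπ p hp p' hp' h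
    have hcardim : (π.2.image (· % t)).card = π.2.card := Finset.card_image_of_injOn hinj
    have htnot : t ∉ π.2.image (· % t) := by
      intro h
      obtain ⟨p, _, hpt⟩ := Finset.mem_image.mp h
      have := Nat.mod_lt p ht
      omega
    show ((π.2.image (· % t)).erase 0 ∪ _).card = π.2.card
    by_cases h0 : 0 ∈ π.2.image (· % t)
    · rw [if_pos h0]
      rw [Finset.card_union_of_disjoint, Finset.card_erase_of_mem h0, Finset.card_singleton]
      · have h1 : 1 ≤ (π.2.image (· % t)).card := Finset.card_pos.mpr ⟨0, h0⟩
        omega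
      · rw [Finset.disjoint_singleton_right]
        intro h
        exact htnot (Finset.mem_of_mem_erase h)
    · rw [if_neg h0, Finset.union_empty, Finset.erase_eq_of_notMem h0, hcardim]

lemma bwd_spec (t : ℕ) (ht : 0 < t) (b : Multiset ℕ × OP) (hb : InB t b) :
    InG t (bwd t b) ∧ (bwd t b).wt = b.1.sum + b.2.1.sum ∧ (bwd t b).o = b.2.o := by
  obtain ⟨hall, ⟨hbpos, hbov⟩, hbne, hble⟩ := hb
  simp only [bwd]
  set R := b.2.1.filter (· < t) with hRdef
  set E := b.2.1.count t with hEdef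
  set c := Multiset.card b.1 + E with hcdef
  set k := Multiset.card R with hkdef
  set q := c / (k + E) with hqdef
  set r := c % (k + E) with hrdef
  set O := b.2.2.erase t with hOdef
  set RL := R.sort (· ≤ ·) with hRLdef
  have hsplit : b.2.1 = R + Multiset.replicate E t := by
    conv_lhs => rw [← Multiset.filter_add_not (· < t) b.2.1]
    congr 1
    rw [show (Multiset.filter (fun x => ¬ x < t) b.2.1) = Multiset.filter (· = t) b.2.1 from
      Multiset.filter_congr (fun x hx => by have := hble x hx; constructor <;> (intro; omega))]
    exact Multiset.filter_eq' b.2.1 t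
  have hD : 0 < k + E := by
    have h1 : Multiset.card b.2.1 = k + E := by
      rw [hsplit, Multiset.card_add, Multiset.card_replicate]
    have h2 : 0 < Multiset.card b.2.1 := Multiset.card_pos.mpr hbne
    omega
  have hcq : q * (k + E) + r = c := by
    rw [hqdef, hrdef, Nat.mul_comm]
    exact Nat.div_add_mod c (k + E)
  have hrlt : r < k + E := Nat.mod_lt _ hD
  have hEc : E ≤ c := by omega
  have hRmem : ∀ x ∈ R, 0 < x ∧ x < t := fun x hx =>
    ⟨hbpos x (Multiset.mem_of_mem_filter hx), (Multiset.mem_filter.mp hx).2⟩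
  have hOmem : ∀ x ∈ O, x ∈ R ∧ 0 < x ∧ x < t := by
    intro x hx
    obtain ⟨hxt, hxb⟩ := Finset.mem_erase.mp hx
    have hx1 : x ∈ b.2.1 := hbov x hxb
    have hxlt : x < t := lt_of_le_of_ne (hble x hx1) hxt
    exact ⟨Multiset.mem_filter.mpr ⟨hx1, hxlt⟩, hbpos x hx1, hxlt⟩
  have hdel : t ∈ b.2.2 → 0 < E := by
    intro h
    rw [hEdef]
    exact Multiset.count_pos.mpr (hbov t h)
  have hb1sum : b.1.sum = Multiset.card b.1 * t := by
    conv_lhs => rw [Multiset.eq_replicate_card.mpr hall]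
    rw [Multiset.sum_replicate, smul_eq_mul]
  have hb2sum : b.2.1.sum = R.sum + E * t := by
    rw [hsplit, Multiset.sum_add, Multiset.sum_replicate, smul_eq_mul]
  have hOcard : b.2.2.card = O.card + (if t ∈ b.2.2 then 1 else 0) := by
    by_cases h : t ∈ b.2.2
    · rw [if_pos h, hOdef, Finset.card_erase_of_mem h]
      have : 0 < b.2.2.card := Finset.card_pos.mpr ⟨t, h⟩
      omega
    · rw [if_neg h, hOdef, Finset.erase_eq_of_notMem h, add_zero]
  by_cases hbr : E ≤ r
  · simp only [if_pos hbr]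
    set j := r - E with hjdef
    have hj2 : j + E = r := by omega
    have hjk : j < k := by omega
    have hlen : RL.length = k := by rw [hRLdef, Multiset.length_sort]
    have hsorted : RL.Pairwise (· ≤ ·) := Multiset.pairwise_sort R _
    obtain ⟨hmAmem, hmAmin, hmAmax⟩ := take_drop_facts RL hsorted j (by omega)
    set mA := (RL.drop j).headI with hmAdef
    have hcoe : (↑RL : Multiset ℕ) = R := Multiset.sort_eq _ _
    have hmAR : mA ∈ R := by
      rw [← hcoe]
      exact Multiset.mem_coe.mpr (List.mem_of_mem_drop hmAmem)
    have hmA := hRmem mA hmAR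
    have hexp : t*(q+1) = t*q + t := by ring
    have hdropmem : ∀ x ∈ R, mA ≤ x → x ∈ RL.drop j := by
      intro x hxR hle
      have hxRL : x ∈ RL := by rw [← Multiset.mem_coe, hcoe]; exact hxR
      rcases List.mem_append.mp (by rw [List.take_append_drop]; exact hxRL :
          x ∈ RL.take j ++ RL.drop j) with h | h
      · have := hmAmax x h
        have : x = mA := by omega
        rwa [this]
      · exact h
    have htakemem : ∀ x ∈ R, x < mA → x ∈ RL.take j := by
      intro x hxR hlt
      have hxRL : x ∈ RL := by rw [← Multiset.mem_coe, hcoe]; exact hxR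
      rcases List.mem_append.mp (by rw [List.take_append_drop]; exact hxRL :
          x ∈ RL.take j ++ RL.drop j) with h | h
      · exact h
      · have := hmAmin x h
        omega
    have hmemM : ∀ p ∈ (↑(List.map (fun x => x + t * (q + 1)) (RL.take j)) +
        ↑(List.map (fun x => x + t * q) (RL.drop j)) + Multiset.replicate E (t * (q + 1)) :
          Multiset ℕ), mA + t*q ≤ p ∧ p ≤ mA + t*q + t := by
      intro p hp
      rcases Multiset.mem_add.mp hp with hp | hp
      · rcases Multiset.mem_add.mp hp with hp | hp
        · obtain ⟨x, hx, rfl⟩ := List.mem_map.mp (Multiset.mem_coe.mp hp)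
          have hx1 := hmAmax x hx
          have hx2 := hRmem x (by rw [← hcoe]; exact Multiset.mem_coe.mpr (List.mem_of_mem_take hx))
          omega
        · obtain ⟨x, hx, rfl⟩ := List.mem_map.mp (Multiset.mem_coe.mp hp)
          have hx1 := hmAmin x hx
          have hx2 := hRmem x (by rw [← hcoe]; exact Multiset.mem_coe.mpr (List.mem_of_mem_drop hx))
          omega
      · have := Multiset.eq_of_mem_replicate hp
        omega
    have hmAmemM : mA + t*q ∈ (↑(List.map (fun x => x + t * (q + 1)) (RL.take j)) +
        ↑(List.map (fun x => x + t * q) (RL.drop j)) + Multiset.replicate E (t * (q + 1)) :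
          Multiset ℕ) :=
      Multiset.mem_add.mpr (Or.inl (Multiset.mem_add.mpr (Or.inr
        (Multiset.mem_coe.mpr (List.mem_map.mpr ⟨mA, hmAmem, rfl⟩)))))
    refine ⟨InG_of_bounds t (mA + t*q) _ ?_ ?_ ?_ hmemM ?_, ?_, ?_⟩
    · intro h0
      have h0' : (↑(List.map (fun x => x + t * (q + 1)) (RL.take j)) +
          ↑(List.map (fun x => x + t * q) (RL.drop j)) + Multiset.replicate E (t * (q + 1)) :
            Multiset ℕ) = 0 := h0
      rw [h0'] at hmAmemM
      simp at hmAmemM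
    · intro p hp
      have := hmemM p hp
      have := hmA.1
      omega
    · intro p hp
      rcases Finset.mem_union.mp hp with h | h
      · obtain ⟨x, hx, rfl⟩ := Finset.mem_image.mp h
        have hxR := (hOmem x hx).1
        by_cases hcase : mA ≤ x
        · rw [if_pos hcase]
          exact Multiset.mem_add.mpr (Or.inl (Multiset.mem_add.mpr (Or.inr
            (Multiset.mem_coe.mpr (List.mem_map.mpr ⟨x, hdropmem x hxR hcase, rfl⟩)))))
        · rw [if_neg hcase]
          exact Multiset.mem_add.mpr (Or.inl (Multiset.mem_add.mpr (Or.inl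
            (Multiset.mem_coe.mpr (List.mem_map.mpr ⟨x, htakemem x hxR (by omega), rfl⟩)))))
      · split_ifs at h with hd
        · rw [Finset.mem_singleton.mp h]
          exact Multiset.mem_add.mpr (Or.inr (Multiset.mem_replicate.mpr ⟨by have := hdel hd; omega, rfl⟩))
        · simp at h
    · intro hcon
      rcases Finset.mem_union.mp hcon with h | h
      · obtain ⟨x, hx, hxe⟩ := Finset.mem_image.mp h
        have hxm := (hOmem x hx).2
        split_ifs at hxe <;> omega
      · split_ifs at h with hd
        · have := Finset.mem_singleton.mp h
          have := hmA.1
          omega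
        · simp at h
    · show Multiset.sum _ = b.1.sum + b.2.1.sum
      rw [hcdef] at hcq
      have hsumTD : ((↑(RL.take j) : Multiset ℕ)).sum + ((↑(RL.drop j) : Multiset ℕ)).sum
          = R.sum := by
        rw [← Multiset.sum_add]
        rw [show ((↑(RL.take j) : Multiset ℕ) + (↑(RL.drop j) : Multiset ℕ))
            = ((RL.take j ++ RL.drop j : List ℕ) : Multiset ℕ) from (Multiset.coe_add _ _).symm]
        rw [List.take_append_drop, hcoe]
      have hcardT : Multiset.card (↑(RL.take j) : Multiset ℕ) = j := by
        rw [Multiset.coe_card, List.length_take]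
        omega
      have hcardD : Multiset.card (↑(RL.drop j) : Multiset ℕ) = k - j := by
        rw [Multiset.coe_card, List.length_drop]
        omega
      rw [show (↑(List.map (fun x => x + t * (q + 1)) (RL.take j)) : Multiset ℕ)
          = (↑(RL.take j) : Multiset ℕ).map (· + t * (q+1)) from (Multiset.map_coe _ _).symm]
      rw [show (↑(List.map (fun x => x + t * q) (RL.drop j)) : Multiset ℕ)
          = (↑(RL.drop j) : Multiset ℕ).map (· + t * q) from (Multiset.map_coe _ _).symm]
      rw [Multiset.sum_add, Multiset.sum_add, sum_map_add_const, sum_map_add_const,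
        Multiset.sum_replicate, smul_eq_mul, hb1sum, hb2sum, hcardT, hcardD]
      set ST := ((↑(RL.take j) : Multiset ℕ)).sum with hSTdef
      set SD := ((↑(RL.drop j) : Multiset ℕ)).sum with hSDdef
      set SR := R.sum with hSRdef
      zify [hjk.le]
      have hcqz : (q:ℤ) * ((k:ℤ)+(E:ℤ)) + (r:ℤ) = (Multiset.card b.1 : ℤ) + (E:ℤ) := by
        exact_mod_cast hcq
      have hj2z : (j:ℤ) + (E:ℤ) = (r:ℤ) := by exact_mod_cast hj2
      have hsumz : (ST:ℤ) + (SD:ℤ) = (SR : ℤ) := by exact_mod_cast hsumTD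
      linear_combination (t:ℤ) * hcqz + (t:ℤ) * hj2z + hsumz
    · show Finset.card _ = b.2.2.card
      rw [hOcard]
      have hinj : Set.InjOn (fun x => if mA ≤ x then x + t * q else x + t * (q+1)) ↑O := by
        intro x hx y hy h
        have hxm := (hOmem x (Finset.mem_coe.mp hx)).2
        have hym := (hOmem y (Finset.mem_coe.mp hy)).2
        simp only at h
        split_ifs at h <;> omega
      rw [Finset.card_union_of_disjoint, Finset.card_image_of_injOn hinj]
      · congr 1
        split_ifs
        · exact Finset.card_singleton _
        · exact Finset.card_empty
      · split_ifs
        · rw [Finset.disjoint_singleton_right]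
          intro h
          obtain ⟨x, hx, hxe⟩ := Finset.mem_image.mp h
          have hxm := (hOmem x hx).2
          split_ifs at hxe <;> omega
        · exact Finset.disjoint_empty_right _
  · simp only [if_neg hbr]
    have hrE : r < E := by omega
    have hq1 : 1 ≤ q := by
      rcases Nat.eq_zero_or_pos q with h | h
      · rw [h] at hcq; simp at hcq; omega
      · exact h
    have htq : t ≤ t * q := Nat.le_mul_of_pos_right t hq1
    rw [hcdef] at hcq
    have hmemM : ∀ p ∈ Multiset.map (fun x => x + t * q) R + Multiset.replicate (E - r) (t * q)
        + Multiset.replicate r (t * (q + 1)), t*q ≤ p ∧ p ≤ t*q + t := by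
      intro p hp
      rcases Multiset.mem_add.mp hp with hp | hp
      · rcases Multiset.mem_add.mp hp with hp | hp
        · obtain ⟨x, hx, rfl⟩ := Multiset.mem_map.mp hp
          have := hRmem x hx
          omega
        · have := Multiset.eq_of_mem_replicate hp
          omega
      · have := Multiset.eq_of_mem_replicate hp
        have h2 : t * (q+1) = t * q + t := by ring
        omega
    have htqmem : t*q ∈ Multiset.map (fun x => x + t * q) R + Multiset.replicate (E - r) (t * q)
        + Multiset.replicate r (t * (q + 1)) :=
      Multiset.mem_add.mpr (Or.inl (Multiset.mem_add.mpr (Or.inr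
        (Multiset.mem_replicate.mpr ⟨by omega, rfl⟩))))
    refine ⟨InG_of_bounds t (t*q) _ ?_ ?_ ?_ hmemM ?_, ?_, ?_⟩
    · intro h0
      have h0' : Multiset.map (fun x => x + t * q) R + Multiset.replicate (E - r) (t * q)
          + Multiset.replicate r (t * (q + 1)) = 0 := h0
      rw [h0'] at htqmem
      simp at htqmem
    · intro p hp
      have := hmemM p hp
      omega
    · intro p hp
      rcases Finset.mem_union.mp hp with h | h
      · obtain ⟨x, hx, rfl⟩ := Finset.mem_image.mp h
        exact Multiset.mem_add.mpr (Or.inl (Multiset.mem_add.mpr (Or.inl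
          (Multiset.mem_map_of_mem _ (hOmem x hx).1))))
      · split_ifs at h with hd
        · rw [Finset.mem_singleton.mp h]
          exact htqmem
        · simp at h
    · intro hcon
      rcases Finset.mem_union.mp hcon with h | h
      · obtain ⟨x, hx, hxe⟩ := Finset.mem_image.mp h
        have := (hOmem x hx).2
        omega
      · split_ifs at h with hd
        · have := Finset.mem_singleton.mp h
          omega
        · simp at h
    · show Multiset.sum _ = b.1.sum + b.2.1.sum
      rw [Multiset.sum_add, Multiset.sum_add, sum_map_add_const, Multiset.sum_replicate,
        Multiset.sum_replicate, smul_eq_mul, smul_eq_mul, hb1sum, hb2sum, ← hkdef]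
      have hrle : r ≤ E := hrE.le
      zify [hrle]
      have hcqz : (q:ℤ) * ((k:ℤ)+(E:ℤ)) + (r:ℤ) = (Multiset.card b.1 : ℤ) + (E:ℤ) := by
        exact_mod_cast hcq
      linear_combination (t:ℤ) * hcqz
    · show Finset.card _ = b.2.2.card
      rw [hOcard]
      have hinj : Set.InjOn (· + t*q) ↑O := fun x _ y _ h => by simpa using h
      rw [Finset.card_union_of_disjoint, Finset.card_image_of_injOn hinj]
      · congr 1
        split_ifs
        · exact Finset.card_singleton _
        · exact Finset.card_empty
      · split_ifs
        · rw [Finset.disjoint_singleton_right]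
          intro h
          obtain ⟨x, hx, hxe⟩ := Finset.mem_image.mp h
          have := (hOmem x hx).2
          omega
        · exact Finset.disjoint_empty_right _


section helpers3

lemma two_val (M : Multiset ℕ) (u v : ℕ) (huv : u ≠ v) (h : ∀ p ∈ M, p = u ∨ p = v) :
    M = Multiset.replicate (M.count u) u + Multiset.replicate (M.count v) v := by
  ext x
  rw [Multiset.count_add, Multiset.count_replicate, Multiset.count_replicate]
  by_cases hxu : x = u
  · subst hxu
    rw [if_pos rfl, if_neg (fun h => huv h.symm), add_zero]
  · rw [if_neg (fun h => hxu h.symm)]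
    by_cases hxv : x = v
    · subst hxv
      rw [if_pos rfl, zero_add]
    · rw [if_neg (fun h => hxv h.symm), zero_add]
      rw [Multiset.count_eq_zero]
      intro hmem
      rcases h x hmem with h | h <;> tauto

lemma sort_split (Bq Aq : Multiset ℕ) (h : ∀ b ∈ Bq, ∀ a ∈ Aq, b ≤ a) :
    (Bq + Aq).sort (· ≤ ·) = Bq.sort (· ≤ ·) ++ Aq.sort (· ≤ ·) := by
  have hperm : List.Perm ((Bq + Aq).sort (· ≤ ·)) (Bq.sort (· ≤ ·) ++ Aq.sort (· ≤ ·)) := by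
    apply Multiset.coe_eq_coe.mp
    rw [Multiset.sort_eq]
    rw [show ((↑(Bq.sort (· ≤ ·) ++ Aq.sort (· ≤ ·)) : Multiset ℕ))
        = (↑(Bq.sort (· ≤ ·)) : Multiset ℕ) + (↑(Aq.sort (· ≤ ·)) : Multiset ℕ) from
        (Multiset.coe_add _ _).symm]
    rw [Multiset.sort_eq, Multiset.sort_eq]
  have hs2 : (Bq.sort (· ≤ ·) ++ Aq.sort (· ≤ ·)).Pairwise (· ≤ ·) := by
    rw [List.pairwise_append]
    refine ⟨Multiset.pairwise_sort _ _, Multiset.pairwise_sort _ _, ?_⟩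
    intro x hx y hy
    exact h x ((Multiset.mem_sort _).mp hx) y ((Multiset.mem_sort _).mp hy)
  exact List.Perm.eq_of_pairwise' (Multiset.pairwise_sort _ _) hs2 hperm

lemma headI_eq_min (l : List ℕ) (hs : l.Pairwise (· ≤ ·)) (x : ℕ) (hx : x ∈ l)
    (hmin : ∀ y ∈ l, x ≤ y) : l.headI = x := by
  cases l with
  | nil => simp at hx
  | cons d ds =>
    simp only [List.headI_cons]
    have h1 := hmin d (List.mem_cons_self)
    rcases List.mem_cons.mp hx with h | h
    · omega
    · have := (List.pairwise_cons.mp hs).1 x h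
      omega

end helpers3

lemma bwd_fwd (t : ℕ) (ht : 0 < t) (π : OP) (hπ : InG t π) : bwd t (fwd t π) = π := by
  have hpos := hπ.1.1
  have hov := hπ.1.2
  have hne := hπ.2.1
  have hEc := E_le_c t ht π hpos
  set s := π.minPart with hsdef
  have hsmem : s ∈ π.1 := minPart_mem hne
  have hs1 : 0 < s := hpos s hsmem
  have hub : ∀ p ∈ π.1, p ≤ s + t := fun p hp => part_le_min_add hπ hp
  have hlb : ∀ p ∈ π.1, s ≤ p := fun p hp => minPart_le hp
  set Nn := π.1.filter (fun p => ¬ p % t = 0) with hNdef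
  set Mm := π.1.filter (fun p => p % t = 0) with hMdef
  have hNM : Mm + Nn = π.1 := Multiset.filter_add_not _ _
  have hNmem : ∀ p ∈ Nn, p ∈ π.1 ∧ ¬ p % t = 0 := fun p hp => Multiset.mem_filter.mp hp
  have hMmem : ∀ p ∈ Mm, p ∈ π.1 ∧ p % t = 0 := fun p hp => Multiset.mem_filter.mp hp
  set Res := Nn.map (· % t) with hResdef
  have hResmem : ∀ x ∈ Res, 0 < x ∧ x < t := by
    intro x hx
    obtain ⟨p, hp, rfl⟩ := Multiset.mem_map.mp hx
    have := (hNmem p hp).2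
    exact ⟨by omega, Nat.mod_lt _ ht⟩
  have hRes : (π.1.map (· % t)).filter (· ≠ 0) = Res := by
    rw [hResdef, hNdef, Multiset.filter_map]
    exact congrArg _ (Multiset.filter_congr (fun x _ => by simp))
  set E := Multiset.card Mm with hEdef
  set c := (π.1.map (· / t)).sum with hcdef
  set k := Multiset.card Res with hkdef
  have hkN : Multiset.card Nn = k := by rw [hkdef, hResdef, Multiset.card_map]
  -- components of fwd
  have hfwd1 : (fwd t π).1 = Multiset.replicate (c - E) t := rfl
  have hfwd21 : (fwd t π).2.1 = Res + Multiset.replicate E t := by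
    show (π.1.map (· % t)).filter (· ≠ 0) + Multiset.replicate E t = _
    rw [hRes]
  have hfwd22 : (fwd t π).2.2
      = (π.2.image (· % t)).erase 0 ∪ (if 0 ∈ π.2.image (· % t) then {t} else ∅) := rfl
  -- bwd's let values
  have hR : (fwd t π).2.1.filter (· < t) = Res := by
    rw [hfwd21, Multiset.filter_add]
    rw [Multiset.filter_eq_self.mpr (fun x hx => (hResmem x hx).2)]
    rw [show (Multiset.replicate E t).filter (· < t) = 0 from
      Multiset.filter_eq_nil.mpr (fun a ha => by rw [Multiset.eq_of_mem_replicate ha]; omega)]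
    rw [add_zero]
  have hE2 : (fwd t π).2.1.count t = E := by
    rw [hfwd21, Multiset.count_add, Multiset.count_replicate_self]
    rw [Multiset.count_eq_zero.mpr (fun h => by have := (hResmem t h).2; omega), zero_add]
  have hc2 : Multiset.card (fwd t π).1 + E = c := by
    rw [hfwd1, Multiset.card_replicate]
    omega
  set Or := π.2.filter (fun p => ¬ p % t = 0) with hOrdef
  set Om := π.2.filter (fun p => p % t = 0) with hOmdef
  have hOrOm : Or ∪ Om = π.2 := by
    rw [hOrdef, hOmdef, Finset.union_comm]
    exact Finset.filter_union_filter_not_eq _ _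
  have hOr : (π.2.image (· % t)).erase 0 = Or.image (· % t) := by
    ext x
    constructor
    · intro hx
      obtain ⟨hx0, hximg⟩ := Finset.mem_erase.mp hx
      obtain ⟨p, hp, rfl⟩ := Finset.mem_image.mp hximg
      exact Finset.mem_image.mpr ⟨p, Finset.mem_filter.mpr ⟨hp, hx0⟩, rfl⟩
    · intro hx
      obtain ⟨p, hp, rfl⟩ := Finset.mem_image.mp hx
      obtain ⟨hp2, hp0⟩ := Finset.mem_filter.mp hp
      exact Finset.mem_erase.mpr ⟨hp0, Finset.mem_image.mpr ⟨p, hp2, rfl⟩⟩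
  have hO : (fwd t π).2.2.erase t = Or.image (· % t) := by
    rw [hfwd22, Finset.erase_union_distrib, ← hOr]
    rw [Finset.erase_eq_of_notMem (fun h => by
      obtain ⟨p, _, hpt⟩ := Finset.mem_image.mp (Finset.mem_of_mem_erase h)
      have := Nat.mod_lt p ht
      omega)]
    by_cases h0 : 0 ∈ π.2.image (· % t)
    · rw [if_pos h0, Finset.erase_singleton, Finset.union_empty]
    · rw [if_neg h0, Finset.erase_empty, Finset.union_empty]
  have hdel : (t ∈ (fwd t π).2.2) ↔ Om.Nonempty := by
    rw [hfwd22]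
    constructor
    · intro h
      rcases Finset.mem_union.mp h with h | h
      · obtain ⟨p, _, hpt⟩ := Finset.mem_image.mp (Finset.mem_of_mem_erase h)
        have := Nat.mod_lt p ht
        omega
      · by_cases h0 : 0 ∈ π.2.image (· % t)
        · obtain ⟨p, hp, hp0⟩ := Finset.mem_image.mp h0
          exact ⟨p, Finset.mem_filter.mpr ⟨hp, hp0⟩⟩
        · rw [if_neg h0] at h
          simp at h
    · intro ⟨p, hp⟩
      obtain ⟨hp2, hp0⟩ := Finset.mem_filter.mp hp
      apply Finset.mem_union_right
      rw [if_pos (Finset.mem_image.mpr ⟨p, hp2, hp0⟩)]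
      exact Finset.mem_singleton_self t
  have hOrval : ∀ p ∈ Or, p ∈ π.1 ∧ ¬ p % t = 0 :=
    fun p hp => ⟨hov p (Finset.mem_filter.mp hp).1, (Finset.mem_filter.mp hp).2⟩
  have hOmval : ∀ p ∈ Om, p ∈ π.1 ∧ p % t = 0 :=
    fun p hp => ⟨hov p (Finset.mem_filter.mp hp).1, (Finset.mem_filter.mp hp).2⟩
  by_cases hsm : s % t = 0
  · -- Case A : min part is a multiple of t; a := s / t ≥ 1
    set a := s / t with hadef
    have hsa : t * a = s := by
      rw [hadef]
      have := Nat.div_add_mod s t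
      omega
    have ha1 : 1 ≤ a := by
      rcases Nat.eq_zero_or_pos a with h | h
      · rw [h] at hsa; omega
      · exact h
    have hNval : ∀ p ∈ Nn, p % t + t * a = p ∧ p / t = a := by
      intro p hp
      obtain ⟨hp1, hp2⟩ := hNmem p hp
      have h1 := hlb p hp1
      have h2 := hub p hp1
      have hne_s : p ≠ s := fun h => hp2 (h ▸ hsm)
      have hne_st : p ≠ s + t := fun h => hp2 (by rw [h, Nat.add_mod_right]; exact hsm)
      have hpd : p = (p - s) + t * a := by omega
      constructor
      · rw [hpd, mod_add_mul_self _ _ _ (by omega)]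
      · rw [hpd, div_add_mul_self _ _ _ ht (by omega)]
    have hMval : ∀ p ∈ Mm, p = t * a ∨ p = t * (a+1) := by
      intro p hp
      obtain ⟨hp1, hp2⟩ := hMmem p hp
      have h1 := hlb p hp1
      have h2 := hub p hp1
      have hpt : p = t * (p / t) := by
        have := Nat.div_add_mod p t
        omega
      have hlow : a ≤ p / t := by
        apply Nat.le_of_mul_le_mul_left _ ht
        omega
      have hhigh : p / t ≤ a + 1 := by
        apply Nat.le_of_mul_le_mul_left _ ht
        have hexp : t * (a + 1) = t * a + t := by ring
        omega
      rcases (by omega : p / t = a ∨ p / t = a + 1) with h | h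
      · left; rw [hpt, h]
      · right; rw [hpt, h]
    set e0 := Mm.count (t * a) with he0def
    set e1 := Mm.count (t * (a+1)) with he1def
    have htane : t * a ≠ t * (a+1) := by
      have hexp : t * (a + 1) = t * a + t := by ring
      omega
    have hMdecomp : Mm = Multiset.replicate e0 (t*a) + Multiset.replicate e1 (t*(a+1)) :=
      two_val Mm _ _ htane hMval
    have hE01 : e0 + e1 = E := by
      have hcM : Multiset.card Mm = e0 + e1 := by
        conv_lhs => rw [hMdecomp]
        rw [Multiset.card_add, Multiset.card_replicate, Multiset.card_replicate]
      rw [hEdef, hcM]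
    have he0pos : 1 ≤ e0 := by
      rw [he0def]
      apply Multiset.count_pos.mpr
      rw [hsa]
      exact Multiset.mem_filter.mpr ⟨hsmem, hsm⟩
    have hdivmap : π.1.map (· / t)
        = (Multiset.replicate e0 a + Multiset.replicate e1 (a+1)) + Multiset.replicate k a := by
      conv_lhs => rw [← hNM]
      rw [Multiset.map_add]
      congr 1
      · rw [hMdecomp, Multiset.map_add, Multiset.map_replicate, Multiset.map_replicate]
        congr 2
        · rw [Nat.mul_comm, Nat.mul_div_left _ ht]
        · rw [Nat.mul_comm, Nat.mul_div_left _ ht]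
      · rw [show Nn.map (· / t) = Nn.map (fun _ => a) from
          Multiset.map_congr rfl (fun p hp => (hNval p hp).2)]
        rw [Multiset.map_const', hkN]
    have hcval : c = (k + E) * a + e1 := by
      rw [hcdef, hdivmap, Multiset.sum_add, Multiset.sum_add, Multiset.sum_replicate,
        Multiset.sum_replicate, Multiset.sum_replicate, smul_eq_mul, smul_eq_mul, smul_eq_mul]
      zify
      have hE01z : (e0:ℤ) + (e1:ℤ) = (E:ℤ) := by exact_mod_cast hE01
      linear_combination (a:ℤ) * hE01z
    have hkE : 0 < k + E := by omega
    have he1lt : e1 < k + E := by omega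
    have hq : c / (k + E) = a := by
      rw [hcval, Nat.mul_add_div hkE, Nat.div_eq_of_lt he1lt, add_zero]
    have hr : c % (k + E) = e1 := by
      rw [hcval, Nat.mul_add_mod, Nat.mod_eq_of_lt he1lt]
    simp only [bwd]
    rw [hR, hE2, hc2, ← hkdef, hq, hr, hO]
    rw [if_neg (by omega : ¬ E ≤ e1)]
    have himg2 : (Or.image (· % t)).image (· + t * a) = Or := by
      rw [Finset.image_image]
      rw [Finset.image_congr (g := id) (fun p hp => by
        have hpOr := hOrval p (Finset.mem_coe.mp hp)
        have := (hNval p (Multiset.mem_filter.mpr ⟨hpOr.1, hpOr.2⟩)).1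
        simpa using this)]
      exact Finset.image_id
    have hOmsub : ∀ p ∈ Om, p = t * a := by
      intro p hp
      have hpv := hOmval p hp
      rcases hMval p (Multiset.mem_filter.mpr hpv) with h | h
      · exact h
      · exfalso
        have hpst : p = s + t := by
          have hexp : t * (a + 1) = t * a + t := by ring
          omega
        have := top_not_overlined hπ (hpst ▸ hpv.1) ht
        rw [← hpst] at this
        exact this (Finset.mem_filter.mp hp).1
    refine Prod.ext ?_ ?_
    · show Res.map (· + t * a) + _ + _ = π.1
      rw [show Res.map (· + t * a) = Nn from by
        rw [hResdef, Multiset.map_map]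
        conv_rhs => rw [← Multiset.map_id Nn]
        exact Multiset.map_congr rfl (fun p hp => (hNval p hp).1)]
      rw [show E - e1 = e0 from by omega]
      rw [add_assoc, ← hMdecomp, add_comm Nn Mm]
      exact hNM
    · show (Or.image (· % t)).image (· + t * a) ∪ _ = π.2
      rw [himg2]
      rw [show (if t ∈ (fwd t π).2.2 then ({t * a} : Finset ℕ) else ∅) = Om from ?_]
      · exact hOrOm
      · by_cases hom : Om.Nonempty
        · rw [if_pos (hdel.mpr hom)]
          obtain ⟨p0, hp0⟩ := hom
          have hp0a := hOmsub p0 hp0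
          apply Finset.Subset.antisymm
          · intro x hx
            rw [Finset.mem_singleton.mp hx, ← hp0a]
            exact hp0
          · intro x hx
            rw [Finset.mem_singleton, hOmsub x hx]
        · rw [if_neg (fun h => hom (hdel.mp h))]
          exact (Finset.not_nonempty_iff_eq_empty.mp hom).symm
  · -- Case B : min part is not a multiple of t
    set a := s / t with hadef
    set ρ := s % t with hρdef
    have hρpos : 0 < ρ := Nat.pos_of_ne_zero (by rw [hρdef]; exact hsm)
    have hρlt : ρ < t := by rw [hρdef]; exact Nat.mod_lt _ ht
    have hsa : ρ + t * a = s := by rw [hρdef, hadef]; exact Nat.mod_add_div s t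
    have hta1 : t * (a+1) = t * a + t := by ring
    set A := Nn.filter (· < t * (a+1)) with hAdef
    set Bm := Nn.filter (fun p => ¬ p < t * (a+1)) with hBdef
    have hAB : A + Bm = Nn := Multiset.filter_add_not _ _
    have hAval : ∀ p ∈ A, p % t + t * a = p ∧ p / t = a ∧ ρ ≤ p % t := by
      intro p hp
      have hpN := Multiset.mem_of_mem_filter hp
      have hplt := (Multiset.mem_filter.mp hp).2
      obtain ⟨hp1, hp2⟩ := hNmem p hpN
      have h1 := hlb p hp1
      have h2 := hub p hp1
      have hpd : p = (p - t*a) + t*a := by omega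
      have hdlt : p - t*a < t := by omega
      refine ⟨?_, ?_, ?_⟩
      · rw [hpd, mod_add_mul_self _ _ _ hdlt]
      · rw [hpd, div_add_mul_self _ _ _ ht hdlt]
      · rw [hpd, mod_add_mul_self _ _ _ hdlt]
        omega
    have hBval : ∀ p ∈ Bm, p % t + t * (a+1) = p ∧ p / t = a + 1 ∧ 0 < p % t ∧ p % t ≤ ρ := by
      intro p hp
      have hpN := Multiset.mem_of_mem_filter hp
      have hplt := (Multiset.mem_filter.mp hp).2
      obtain ⟨hp1, hp2⟩ := hNmem p hpN
      have h1 := hlb p hp1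
      have h2 := hub p hp1
      have hne1 : p ≠ t * (a+1) := by
        intro h
        apply hp2
        rw [h, Nat.mul_comm, Nat.mul_mod_left]
      have hpd : p = (p - t*(a+1)) + t*(a+1) := by omega
      have hdlt : p - t*(a+1) < t := by omega
      refine ⟨?_, ?_, ?_, ?_⟩
      · rw [hpd, mod_add_mul_self _ _ _ hdlt]
      · rw [hpd, div_add_mul_self _ _ _ ht hdlt]
      · rw [hpd, mod_add_mul_self _ _ _ hdlt]
        omega
      · rw [hpd, mod_add_mul_self _ _ _ hdlt]
        omega
    have hMall : ∀ p ∈ Mm, p = t * (a+1) := by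
      intro p hp
      obtain ⟨hp1, hp2⟩ := hMmem p hp
      have h1 := hlb p hp1
      have h2 := hub p hp1
      have hpt : p = t * (p / t) := by
        have := Nat.div_add_mod p t
        omega
      have hlow : a + 1 ≤ p / t := by
        have h3 : t * a < t * (p / t) := by omega
        exact Nat.lt_of_mul_lt_mul_left h3
      have hhigh : p / t < a + 2 := by
        have hexp : t * (a + 2) = t * a + 2 * t := by ring
        have h3 : t * (p / t) < t * (a + 2) := by omega
        exact Nat.lt_of_mul_lt_mul_left h3
      rw [hpt, (by omega : p / t = a + 1)]
    have hMrep : Mm = Multiset.replicate E (t*(a+1)) := by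
      rw [hEdef]
      exact Multiset.eq_replicate_card.mpr hMall
    set Ares := A.map (· % t) with hAresdef
    set Bres := Bm.map (· % t) with hBresdef
    set j := Multiset.card Bres with hjdef
    have hcardA : Multiset.card Ares = Multiset.card A := Multiset.card_map _ _
    have hkAB : Multiset.card Ares + j = k := by
      rw [hcardA, hjdef, hBresdef, Multiset.card_map, hkdef, hResdef, Multiset.card_map, ← hAB,
        Multiset.card_add]
    have hResAB : Res = Bres + Ares := by
      rw [hResdef, ← hAB, Multiset.map_add, add_comm]
    have hdom : ∀ x ∈ Bres, ∀ y ∈ Ares, x ≤ y := by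
      intro x hx y hy
      obtain ⟨p, hp, rfl⟩ := Multiset.mem_map.mp hx
      obtain ⟨p', hp', rfl⟩ := Multiset.mem_map.mp hy
      have h1 := (hBval p hp).2.2.2
      have h2 := (hAval p' hp').2.2
      omega
    have hsortsplit : Res.sort (· ≤ ·) = Bres.sort (· ≤ ·) ++ Ares.sort (· ≤ ·) := by
      rw [hResAB]
      exact sort_split _ _ hdom
    have hsA : s ∈ A := by
      apply Multiset.mem_filter.mpr
      refine ⟨Multiset.mem_filter.mpr ⟨hsmem, hsm⟩, by omega⟩
    have hA1 : 1 ≤ Multiset.card Ares := by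
      rw [hcardA]
      exact Multiset.card_pos.mpr (fun h0 => by rw [h0] at hsA; simp at hsA)
    have hcval : c = (k + E) * a + (j + E) := by
      have hdivmap : π.1.map (· / t)
          = Multiset.replicate E (a+1)
            + (Multiset.replicate (Multiset.card A) a
               + Multiset.replicate (Multiset.card Bm) (a+1)) := by
        conv_lhs => rw [← hNM, ← hAB]
        rw [Multiset.map_add, Multiset.map_add]
        congr 1
        · rw [hMrep, Multiset.map_replicate]
          rw [Nat.mul_comm, Nat.mul_div_left _ ht]
        · congr 1
          · rw [show A.map (· / t) = A.map (fun _ => a) from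
              Multiset.map_congr rfl (fun p hp => (hAval p hp).2.1)]
            rw [Multiset.map_const']
          · rw [show Bm.map (· / t) = Bm.map (fun _ => (a+1)) from
              Multiset.map_congr rfl (fun p hp => (hBval p hp).2.1)]
            rw [Multiset.map_const']
      rw [hcdef, hdivmap, Multiset.sum_add, Multiset.sum_add, Multiset.sum_replicate,
        Multiset.sum_replicate, Multiset.sum_replicate, smul_eq_mul, smul_eq_mul, smul_eq_mul]
      have hj2 : j = Multiset.card Bm := by rw [hjdef, hBresdef, Multiset.card_map]
      have hk2 : k = Multiset.card A + Multiset.card Bm := by omega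
      zify
      have hk2z : (k:ℤ) = (Multiset.card A : ℤ) + (Multiset.card Bm : ℤ) := by exact_mod_cast hk2
      have hjz : (j:ℤ) = (Multiset.card Bm : ℤ) := by exact_mod_cast hj2
      linear_combination (-(a:ℤ)) * hk2z - hjz
    have hjElt : j + E < k + E := by omega
    have hq : c / (k + E) = a := by
      rw [hcval, Nat.mul_add_div (by omega), Nat.div_eq_of_lt hjElt, add_zero]
    have hr : c % (k + E) = j + E := by
      rw [hcval, Nat.mul_add_mod, Nat.mod_eq_of_lt hjElt]
    have hlenB : (Bres.sort (· ≤ ·)).length = j := by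
      rw [Multiset.length_sort]
    have htake : (Res.sort (· ≤ ·)).take j = Bres.sort (· ≤ ·) := by
      rw [hsortsplit, ← hlenB, List.take_left]
    have hdrop : (Res.sort (· ≤ ·)).drop j = Ares.sort (· ≤ ·) := by
      rw [hsortsplit, ← hlenB, List.drop_left]
    have hρA : ρ ∈ Ares := Multiset.mem_map.mpr ⟨s, hsA, by rw [hρdef]⟩
    have hAresmin : ∀ y ∈ Ares, ρ ≤ y := by
      intro y hy
      obtain ⟨p, hp, rfl⟩ := Multiset.mem_map.mp hy
      exact (hAval p hp).2.2
    have hmA : ((Ares.sort (· ≤ ·)).headI) = ρ :=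
      headI_eq_min _ (Multiset.pairwise_sort _ _) ρ ((Multiset.mem_sort _).mpr hρA)
        (fun y hy => hAresmin y ((Multiset.mem_sort _).mp hy))
    simp only [bwd]
    rw [hR, hE2, hc2, ← hkdef, hq, hr, hO]
    rw [if_pos (by omega : E ≤ j + E)]
    rw [show j + E - E = j from by omega]
    rw [htake, hdrop, hmA]
    have himg2 : (Or.image (· % t)).image
        (fun x => if ρ ≤ x then x + t * a else x + t * (a+1)) = Or := by
      rw [Finset.image_image]
      rw [Finset.image_congr (g := id) (fun p hp => by
        have hpOr := hOrval p (Finset.mem_coe.mp hp)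
        have hpN : p ∈ Nn := Multiset.mem_filter.mpr ⟨hpOr.1, hpOr.2⟩
        simp only [Function.comp, id]
        rcases Multiset.mem_add.mp ((hAB ▸ hpN) : p ∈ A + Bm) with hA' | hB'
        · rw [if_pos (hAval p hA').2.2]
          exact (hAval p hA').1
        · have hBv := hBval p hB'
          by_cases hcase : p % t = ρ
          · exfalso
            have hpst : p = s + t := by omega
            have := top_not_overlined hπ (hpst ▸ hpOr.1) ht
            rw [← hpst] at this
            exact this (Finset.mem_filter.mp hp).1
          · rw [if_neg (by omega : ¬ ρ ≤ p % t)]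
            exact hBv.1)]
      exact Finset.image_id
    refine Prod.ext ?_ ?_
    · show ↑(List.map (fun x => x + t * (a+1)) (Bres.sort (· ≤ ·)))
        + ↑(List.map (fun x => x + t * a) (Ares.sort (· ≤ ·))) + _ = π.1
      rw [show (↑(List.map (fun x => x + t * (a+1)) (Bres.sort (· ≤ ·))) : Multiset ℕ)
          = Bres.map (· + t * (a+1)) from by rw [← Multiset.map_coe, Multiset.sort_eq]]
      rw [show (↑(List.map (fun x => x + t * a) (Ares.sort (· ≤ ·))) : Multiset ℕ)
          = Ares.map (· + t * a) from by rw [← Multiset.map_coe, Multiset.sort_eq]]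
      rw [show Bres.map (· + t * (a+1)) = Bm from by
        rw [hBresdef, Multiset.map_map]
        conv_rhs => rw [← Multiset.map_id Bm]
        exact Multiset.map_congr rfl (fun p hp => (hBval p hp).1)]
      rw [show Ares.map (· + t * a) = A from by
        rw [hAresdef, Multiset.map_map]
        conv_rhs => rw [← Multiset.map_id A]
        exact Multiset.map_congr rfl (fun p hp => (hAval p hp).1)]
      rw [← hMrep]
      conv_rhs => rw [← hNM, ← hAB]
      rw [add_comm Bm A, add_comm (A + Bm) Mm]
    · show (Or.image (· % t)).image _ ∪ _ = π.2
      rw [himg2]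
      rw [show (if t ∈ (fwd t π).2.2 then ({t * (a+1)} : Finset ℕ) else ∅) = Om from ?_]
      · exact hOrOm
      · by_cases hom : Om.Nonempty
        · rw [if_pos (hdel.mpr hom)]
          obtain ⟨p0, hp0⟩ := hom
          have hp0a := hMall p0 (Multiset.mem_filter.mpr (hOmval p0 hp0))
          apply Finset.Subset.antisymm
          · intro x hx
            rw [Finset.mem_singleton.mp hx, ← hp0a]
            exact hp0
          · intro x hx
            rw [Finset.mem_singleton, hMall x (Multiset.mem_filter.mpr (hOmval x hx))]
        · rw [if_neg (fun h => hom (hdel.mp h))]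
          exact (Finset.not_nonempty_iff_eq_empty.mp hom).symm

lemma fwd_bwd (t : ℕ) (ht : 0 < t) (b : Multiset ℕ × OP) (hb : InB t b) : fwd t (bwd t b) = b := by
  obtain ⟨hall, ⟨hbpos, hbov⟩, hbne, hble⟩ := hb
  simp only [bwd]
  set R := b.2.1.filter (· < t) with hRdef
  set E := b.2.1.count t with hEdef
  set c := Multiset.card b.1 + E with hcdef
  set k := Multiset.card R with hkdef
  set q := c / (k + E) with hqdef
  set r := c % (k + E) with hrdef
  set O := b.2.2.erase t with hOdef
  set RL := R.sort (· ≤ ·) with hRLdef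
  have hsplit : b.2.1 = R + Multiset.replicate E t := by
    conv_lhs => rw [← Multiset.filter_add_not (· < t) b.2.1]
    congr 1
    rw [show (Multiset.filter (fun x => ¬ x < t) b.2.1) = Multiset.filter (· = t) b.2.1 from
      Multiset.filter_congr (fun x hx => by have := hble x hx; constructor <;> (intro; omega))]
    exact Multiset.filter_eq' b.2.1 t
  have hD : 0 < k + E := by
    have h1 : Multiset.card b.2.1 = k + E := by
      rw [hsplit, Multiset.card_add, Multiset.card_replicate]
    have h2 : 0 < Multiset.card b.2.1 := Multiset.card_pos.mpr hbne
    omega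
  have hcq : q * (k + E) + r = c := by
    rw [hqdef, hrdef, Nat.mul_comm]
    exact Nat.div_add_mod c (k + E)
  have hrlt : r < k + E := Nat.mod_lt _ hD
  have hEc : E ≤ c := by omega
  have hRmem : ∀ x ∈ R, 0 < x ∧ x < t := fun x hx =>
    ⟨hbpos x (Multiset.mem_of_mem_filter hx), (Multiset.mem_filter.mp hx).2⟩
  have hOmem : ∀ x ∈ O, x ∈ R ∧ 0 < x ∧ x < t := by
    intro x hx
    obtain ⟨hxt, hxb⟩ := Finset.mem_erase.mp hx
    have hx1 : x ∈ b.2.1 := hbov x hxb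
    have hxlt : x < t := lt_of_le_of_ne (hble x hx1) hxt
    exact ⟨Multiset.mem_filter.mpr ⟨hx1, hxlt⟩, hbpos x hx1, hxlt⟩
  have hb1 : b.1 = Multiset.replicate (Multiset.card b.1) t := Multiset.eq_replicate_card.mpr hall
  have hb22 : O ∪ (if t ∈ b.2.2 then ({t} : Finset ℕ) else ∅) = b.2.2 := by
    by_cases hd : t ∈ b.2.2
    · rw [if_pos hd, Finset.union_comm, ← Finset.insert_eq, hOdef, Finset.insert_erase hd]
    · rw [if_neg hd, Finset.union_empty, hOdef, Finset.erase_eq_of_notMem hd]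
  by_cases hbr : E ≤ r
  · simp only [if_pos hbr]
    set j := r - E with hjdef
    have hj2 : j + E = r := by omega
    have hjk : j < k := by omega
    have hlen : RL.length = k := by rw [hRLdef, Multiset.length_sort]
    set mA := (RL.drop j).headI with hmAdef
    have hcoe : (↑RL : Multiset ℕ) = R := Multiset.sort_eq _ _
    have hTD : (↑(RL.take j) : Multiset ℕ) + (↑(RL.drop j) : Multiset ℕ) = R := by
      rw [show ((↑(RL.take j) : Multiset ℕ) + (↑(RL.drop j) : Multiset ℕ))
          = ((RL.take j ++ RL.drop j : List ℕ) : Multiset ℕ) from (Multiset.coe_add _ _).symm]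
      rw [List.take_append_drop, hcoe]
    have hTmem : ∀ x ∈ (↑(RL.take j) : Multiset ℕ), 0 < x ∧ x < t := by
      intro x hx
      exact hRmem x (by rw [← hTD]; exact Multiset.mem_add.mpr (Or.inl hx))
    have hDmem : ∀ x ∈ (↑(RL.drop j) : Multiset ℕ), 0 < x ∧ x < t := by
      intro x hx
      exact hRmem x (by rw [← hTD]; exact Multiset.mem_add.mpr (Or.inr hx))
    rw [show (↑(List.map (fun x => x + t * (q + 1)) (RL.take j)) : Multiset ℕ)
        = (↑(RL.take j) : Multiset ℕ).map (· + t * (q+1)) from (Multiset.map_coe _ _).symm]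
    rw [show (↑(List.map (fun x => x + t * q) (RL.drop j)) : Multiset ℕ)
        = (↑(RL.drop j) : Multiset ℕ).map (· + t * q) from (Multiset.map_coe _ _).symm]
    set T := (↑(RL.take j) : Multiset ℕ) with hTdef
    set D := (↑(RL.drop j) : Multiset ℕ) with hDdef
    have hcardT : Multiset.card T = j := by
      rw [hTdef, Multiset.coe_card, List.length_take]; omega
    have hcardD : Multiset.card D = k - j := by
      rw [hDdef, Multiset.coe_card, List.length_drop]; omega
    have hmod : (T.map (· + t * (q+1)) + D.map (· + t * q)
        + Multiset.replicate E (t * (q + 1))).map (· % t)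
        = T + D + Multiset.replicate E 0 := by
      rw [Multiset.map_add, Multiset.map_add, Multiset.map_map, Multiset.map_map,
        Multiset.map_replicate]
      congr 1
      · congr 1
        · conv_rhs => rw [← Multiset.map_id T]
          exact Multiset.map_congr rfl (fun x hx => mod_add_mul_self x t (q+1) (hTmem x hx).2)
        · conv_rhs => rw [← Multiset.map_id D]
          exact Multiset.map_congr rfl (fun x hx => mod_add_mul_self x t q (hDmem x hx).2)
      · rw [Nat.mul_comm, Nat.mul_mod_left]
    have hdiv : (T.map (· + t * (q+1)) + D.map (· + t * q)
        + Multiset.replicate E (t * (q + 1))).map (· / t)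
        = Multiset.replicate j (q+1) + Multiset.replicate (k-j) q
          + Multiset.replicate E (q+1) := by
      rw [Multiset.map_add, Multiset.map_add, Multiset.map_map, Multiset.map_map,
        Multiset.map_replicate]
      congr 1
      · congr 1
        · rw [show (Multiset.map ((fun x => x / t) ∘ fun x => x + t * (q+1)) T)
              = T.map (fun _ => (q+1)) from
              Multiset.map_congr rfl (fun x hx => div_add_mul_self x t (q+1) ht (hTmem x hx).2)]
          rw [Multiset.map_const', hcardT]
        · rw [show (Multiset.map ((fun x => x / t) ∘ fun x => x + t * q) D)
              = D.map (fun _ => q) from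
              Multiset.map_congr rfl (fun x hx => div_add_mul_self x t q ht (hDmem x hx).2)]
          rw [Multiset.map_const', hcardD]
      · rw [Nat.mul_comm, Nat.mul_div_left _ ht]
    have hfilter0 : (T + D + Multiset.replicate E 0).filter (· ≠ 0) = T + D := by
      rw [Multiset.filter_add, Multiset.filter_add]
      rw [Multiset.filter_eq_self.mpr (fun x hx => (hTmem x hx).1.ne')]
      rw [Multiset.filter_eq_self.mpr (fun x hx => (hDmem x hx).1.ne')]
      rw [show (Multiset.replicate E 0).filter (· ≠ 0) = 0 from
        Multiset.filter_eq_nil.mpr (fun a ha => by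
          simp [Multiset.eq_of_mem_replicate ha])]
      rw [add_zero]
    have hEnew : Multiset.card ((T.map (· + t * (q+1)) + D.map (· + t * q)
        + Multiset.replicate E (t * (q + 1))).filter (· % t = 0)) = E := by
      rw [← Multiset.countP_eq_card_filter]
      rw [show (Multiset.countP (fun p => p % t = 0) (T.map (· + t * (q+1)) + D.map (· + t * q)
          + Multiset.replicate E (t * (q + 1))))
          = Multiset.countP (fun p => p = 0) ((T.map (· + t * (q+1)) + D.map (· + t * q)
          + Multiset.replicate E (t * (q + 1))).map (· % t)) from
          (by rw [Multiset.countP_map, ← Multiset.countP_eq_card_filter])]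
      rw [hmod, Multiset.countP_add, Multiset.countP_add]
      rw [Multiset.countP_eq_card_filter, Multiset.countP_eq_card_filter,
        Multiset.countP_eq_card_filter]
      rw [show (T.filter (fun p => p = 0)) = 0 from
        Multiset.filter_eq_nil.mpr (fun a ha => (hTmem a ha).1.ne')]
      rw [show (D.filter (fun p => p = 0)) = 0 from
        Multiset.filter_eq_nil.mpr (fun a ha => (hDmem a ha).1.ne')]
      rw [show ((Multiset.replicate E 0).filter (fun p => p = 0)) = Multiset.replicate E 0 from
        Multiset.filter_eq_self.mpr (fun a ha => Multiset.eq_of_mem_replicate ha)]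
      simp
    have hcnew : ((T.map (· + t * (q+1)) + D.map (· + t * q)
        + Multiset.replicate E (t * (q + 1))).map (· / t)).sum = c := by
      rw [hdiv, Multiset.sum_add, Multiset.sum_add, Multiset.sum_replicate,
        Multiset.sum_replicate, Multiset.sum_replicate, smul_eq_mul, smul_eq_mul, smul_eq_mul]
      have hkj : j ≤ k := hjk.le
      zify [hkj]
      have hcqz : (q:ℤ) * ((k:ℤ)+(E:ℤ)) + (r:ℤ) = (c : ℤ) := by exact_mod_cast hcq
      have hj2z : (j:ℤ) + (E:ℤ) = (r:ℤ) := by exact_mod_cast hj2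
      linear_combination hcqz + hj2z
    simp only [fwd]
    refine Prod.ext ?_ (Prod.ext ?_ ?_)
    · show Multiset.replicate _ t = b.1
      rw [hEnew, hcnew]
      rw [show c - E = Multiset.card b.1 by omega]
      exact hb1.symm
    · show (_ : Multiset ℕ) = b.2.1
      rw [hmod, hfilter0, hEnew, hTD, hsplit]
    · show (_ : Finset ℕ) = b.2.2
      have himg : (Finset.image (fun x => if mA ≤ x then x + t * q else x + t * (q+1)) O).image
          (· % t) = O := by
        rw [Finset.image_image]
        rw [show ((fun p => p % t) ∘ fun x => if mA ≤ x then x + t * q else x + t * (q+1))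
            = fun x => (if mA ≤ x then x + t * q else x + t * (q+1)) % t from rfl]
        rw [Finset.image_congr (g := id) (fun x hx => by
          have hxm := (hOmem x (Finset.mem_coe.mp hx)).2
          simp only [id]
          split_ifs
          · exact mod_add_mul_self x t q hxm.2
          · exact mod_add_mul_self x t (q+1) hxm.2)]
        exact Finset.image_id
      by_cases hd : t ∈ b.2.2
      · simp only [if_pos hd]
        rw [Finset.image_union, himg, Finset.image_singleton]
        rw [show t * (q+1) % t = 0 from by rw [Nat.mul_comm, Nat.mul_mod_left]]
        rw [if_pos (Finset.mem_union_right _ (Finset.mem_singleton_self 0))]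
        rw [Finset.erase_union_distrib, Finset.erase_singleton,
          Finset.erase_eq_of_notMem (fun h => (hOmem 0 h).2.1.ne' rfl), Finset.union_empty]
        rw [← hb22, if_pos hd]
      · simp only [if_neg hd]
        rw [Finset.union_empty, himg]
        rw [Finset.erase_eq_of_notMem (fun h => absurd rfl (hOmem 0 h).2.1.ne')]
        rw [if_neg (fun h => absurd rfl (hOmem 0 h).2.1.ne'), Finset.union_empty]
        rw [← hb22, if_neg hd, Finset.union_empty]
  · simp only [if_neg hbr]
    have hrE : r < E := by omega
    have hq1 : 1 ≤ q := by
      rcases Nat.eq_zero_or_pos q with h | h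
      · rw [h] at hcq; simp at hcq; omega
      · exact h
    have hmod : (R.map (· + t * q) + Multiset.replicate (E - r) (t * q)
        + Multiset.replicate r (t * (q + 1))).map (· % t)
        = R + Multiset.replicate (E - r) 0 + Multiset.replicate r 0 := by
      rw [Multiset.map_add, Multiset.map_add, Multiset.map_map, Multiset.map_replicate,
        Multiset.map_replicate]
      congr 1
      · congr 1
        · conv_rhs => rw [← Multiset.map_id R]
          exact Multiset.map_congr rfl (fun x hx => mod_add_mul_self x t q (hRmem x hx).2)
        · rw [Nat.mul_comm, Nat.mul_mod_left]
      · rw [Nat.mul_comm, Nat.mul_mod_left]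
    have hdiv : (R.map (· + t * q) + Multiset.replicate (E - r) (t * q)
        + Multiset.replicate r (t * (q + 1))).map (· / t)
        = Multiset.replicate k q + Multiset.replicate (E - r) q
          + Multiset.replicate r (q+1) := by
      rw [Multiset.map_add, Multiset.map_add, Multiset.map_map, Multiset.map_replicate,
        Multiset.map_replicate]
      congr 1
      · congr 1
        · rw [show (Multiset.map ((fun x => x / t) ∘ fun x => x + t * q) R)
              = R.map (fun _ => q) from
              Multiset.map_congr rfl (fun x hx => div_add_mul_self x t q ht (hRmem x hx).2)]
          rw [Multiset.map_const']
        · rw [Nat.mul_comm, Nat.mul_div_left _ ht]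
      · rw [Nat.mul_comm, Nat.mul_div_left _ ht]
    have hfilter0 : (R + Multiset.replicate (E - r) 0 + Multiset.replicate r 0).filter (· ≠ 0)
        = R := by
      rw [Multiset.filter_add, Multiset.filter_add]
      rw [Multiset.filter_eq_self.mpr (fun x hx => (hRmem x hx).1.ne')]
      rw [show (Multiset.replicate (E - r) 0).filter (· ≠ 0) = 0 from
        Multiset.filter_eq_nil.mpr (fun a ha => by simp [Multiset.eq_of_mem_replicate ha])]
      rw [show (Multiset.replicate r 0).filter (· ≠ 0) = 0 from
        Multiset.filter_eq_nil.mpr (fun a ha => by simp [Multiset.eq_of_mem_replicate ha])]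
      rw [add_zero, add_zero]
    have hEnew : Multiset.card ((R.map (· + t * q) + Multiset.replicate (E - r) (t * q)
        + Multiset.replicate r (t * (q + 1))).filter (· % t = 0)) = E := by
      rw [← Multiset.countP_eq_card_filter]
      rw [show (Multiset.countP (fun p => p % t = 0) (R.map (· + t * q)
          + Multiset.replicate (E - r) (t * q) + Multiset.replicate r (t * (q + 1))))
          = Multiset.countP (fun p => p = 0) ((R.map (· + t * q)
          + Multiset.replicate (E - r) (t * q)
          + Multiset.replicate r (t * (q + 1))).map (· % t)) from
          (by rw [Multiset.countP_map, ← Multiset.countP_eq_card_filter])]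
      rw [hmod, Multiset.countP_add, Multiset.countP_add]
      rw [Multiset.countP_eq_card_filter, Multiset.countP_eq_card_filter,
        Multiset.countP_eq_card_filter]
      rw [show (R.filter (fun p => p = 0)) = 0 from
        Multiset.filter_eq_nil.mpr (fun a ha => (hRmem a ha).1.ne')]
      rw [show ((Multiset.replicate (E - r) 0).filter (fun p => p = 0))
          = Multiset.replicate (E - r) 0 from
        Multiset.filter_eq_self.mpr (fun a ha => Multiset.eq_of_mem_replicate ha)]
      rw [show ((Multiset.replicate r 0).filter (fun p => p = 0))
          = Multiset.replicate r 0 from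
        Multiset.filter_eq_self.mpr (fun a ha => Multiset.eq_of_mem_replicate ha)]
      simp
      omega
    have hcnew : ((R.map (· + t * q) + Multiset.replicate (E - r) (t * q)
        + Multiset.replicate r (t * (q + 1))).map (· / t)).sum = c := by
      rw [hdiv, Multiset.sum_add, Multiset.sum_add, Multiset.sum_replicate,
        Multiset.sum_replicate, Multiset.sum_replicate, smul_eq_mul, smul_eq_mul, smul_eq_mul]
      zify [hrE.le]
      have hcqz : (q:ℤ) * ((k:ℤ)+(E:ℤ)) + (r:ℤ) = (c : ℤ) := by exact_mod_cast hcq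
      linear_combination hcqz
    simp only [fwd]
    refine Prod.ext ?_ (Prod.ext ?_ ?_)
    · show Multiset.replicate _ t = b.1
      rw [hEnew, hcnew]
      rw [show c - E = Multiset.card b.1 by omega]
      exact hb1.symm
    · show (_ : Multiset ℕ) = b.2.1
      rw [hmod, hfilter0, hEnew, hsplit]
    · show (_ : Finset ℕ) = b.2.2
      have himg : (Finset.image (fun x => x + t * q) O).image (· % t) = O := by
        rw [Finset.image_image]
        rw [Finset.image_congr (g := id) (fun x hx => by
          have hxm := (hOmem x (Finset.mem_coe.mp hx)).2
          simp only [id, Function.comp]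
          exact mod_add_mul_self x t q hxm.2)]
        exact Finset.image_id
      by_cases hd : t ∈ b.2.2
      · simp only [if_pos hd]
        rw [Finset.image_union, himg, Finset.image_singleton]
        rw [show t * q % t = 0 from by rw [Nat.mul_comm, Nat.mul_mod_left]]
        rw [if_pos (Finset.mem_union_right _ (Finset.mem_singleton_self 0))]
        rw [Finset.erase_union_distrib, Finset.erase_singleton,
          Finset.erase_eq_of_notMem (fun h => absurd rfl (hOmem 0 h).2.1.ne'), Finset.union_empty]
        rw [← hb22, if_pos hd]
      · simp only [if_neg hd]
        rw [Finset.union_empty, himg]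
        rw [Finset.erase_eq_of_notMem (fun h => absurd rfl (hOmem 0 h).2.1.ne')]
        rw [if_neg (fun h => absurd rfl (hOmem 0 h).2.1.ne'), Finset.union_empty]
        rw [← hb22, if_neg hd, Finset.union_empty]


theorem G_equinumerous_B (t : ℕ) (ht : 0 < t) (n : ℕ) :
    Nat.card {π : OP // InG t π ∧ π.wt = n} =
      Nat.card {b : Multiset ℕ × OP // InB t b ∧ b.1.sum + b.2.1.sum = n} ∧
    ∀ m : ℕ, Nat.card {π : OP // InG t π ∧ π.wt = n ∧ π.o = m} =
      Nat.card {b : Multiset ℕ × OP // InB t b ∧ b.1.sum + b.2.1.sum = n ∧ b.2.o = m} := by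
  constructor
  · refine Nat.card_congr ⟨fun x => ⟨fwd t x.1, ?_⟩, fun y => ⟨bwd t y.1, ?_⟩, ?_, ?_⟩
    · obtain ⟨h1, h2, _⟩ := fwd_spec t ht x.1 x.2.1
      exact ⟨h1, by rw [h2, x.2.2]⟩
    · obtain ⟨h1, h2, _⟩ := bwd_spec t ht y.1 y.2.1
      exact ⟨h1, by rw [h2, y.2.2]⟩
    · intro x; exact Subtype.ext (bwd_fwd t ht x.1 x.2.1)
    · intro y; exact Subtype.ext (fwd_bwd t ht y.1 y.2.1)
  · intro m
    refine Nat.card_congr ⟨fun x => ⟨fwd t x.1, ?_⟩, fun y => ⟨bwd t y.1, ?_⟩, ?_, ?_⟩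
    · obtain ⟨h1, h2, h3⟩ := fwd_spec t ht x.1 x.2.1
      exact ⟨h1, by rw [h2, x.2.2.1], by rw [h3, x.2.2.2]⟩
    · obtain ⟨h1, h2, h3⟩ := bwd_spec t ht y.1 y.2.1
      exact ⟨h1, by rw [h2, y.2.2.1], by rw [h3, y.2.2.2]⟩
    · intro x; exact Subtype.ext (bwd_fwd t ht x.1 x.2.1)
    · intro y; exact Subtype.ext (fwd_bwd t ht y.1 y.2.1)
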